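/- Let p > 2 be a prime and let a, b be integers with gcd(ab, p) = 1 and a ≢ b (mod p). Then Kl(a,p) ≠ Kl(b,p). -/

import Mathlib

/-- `e(t) = exp(2πit)`. -/
noncomputable def eC (t : ℂ) : ℂ := Complex.exp (2 * Real.pi * Complex.I * t)

/-- The Kloosterman sum `S(a,b;c) = Σ_{x mod c, (x,c)=1} e((ax + b x̄)/c)`. -/
noncomputable def kloos (a b : ℤ) (c : ℕ) : ℂ :=
  ∑ x ∈ Finset.range c,
    if Nat.gcd x c = 1 then
      eC (((a : ℂ) * (x : ℂ) + (b : ℂ) * (((x : ZMod c)⁻¹).val : ℂ)) / (c : ℂ))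
    else 0

open Finset

variable {p : ℕ} [Fact p.Prime]

lemma rc2 (hp2 : p ≠ 2) : ringChar (ZMod p) ≠ 2 := by
  rw [ZMod.ringChar_zmod_n]; exact hp2

/-- χ(t(t-d)) summed over all t is -1, for d ≠ 0. -/
lemma sum_char_mul_shift (hp2 : p ≠ 2) (d : ZMod p) (hd : d ≠ 0) :
    ∑ t : ZMod p, quadraticChar (ZMod p) (t * (t - d)) = -1 := by
  classical
  have h0 : (0 : ZMod p) ∈ (univ : Finset (ZMod p)) := mem_univ _
  rw [← Finset.add_sum_erase _ _ h0]
  rw [zero_mul, MulChar.map_zero, zero_add]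
  have key : ∑ t ∈ univ.erase (0 : ZMod p), quadraticChar (ZMod p) (t * (t - d))
      = ∑ v ∈ univ.erase (1 : ZMod p), quadraticChar (ZMod p) v := by
    apply Finset.sum_nbij' (fun t => 1 - d * t⁻¹) (fun v => d * (1 - v)⁻¹)
    · intro t ht
      simp only [mem_erase, mem_univ, and_true] at ht ⊢
      intro h
      have : d * t⁻¹ = 0 := by linear_combination -h
      rcases mul_eq_zero.mp this with h' | h'
      · exact hd h'
      · exact ht (by simpa using (inv_eq_zero.mp h'))
    · intro v hv
      simp only [mem_erase, mem_univ, and_true] at hv ⊢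
      intro h
      rcases mul_eq_zero.mp h with h' | h'
      · exact hd h'
      · exact hv (by
          have : (1 : ZMod p) - v ≠ 0 := sub_ne_zero.mpr (Ne.symm hv)
          exact absurd h' (inv_ne_zero this))
    · intro t ht
      simp only [mem_erase, mem_univ, and_true] at ht
      have htinv : t⁻¹ ≠ 0 := inv_ne_zero ht
      have : (1 : ZMod p) - (1 - d * t⁻¹) = d * t⁻¹ := by ring
      rw [this, mul_inv, inv_inv, ← mul_assoc, mul_inv_cancel₀ hd, one_mul]
    · intro v hv
      simp only [mem_erase, mem_univ, and_true] at hv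
      have h1v : (1 : ZMod p) - v ≠ 0 := sub_ne_zero.mpr (Ne.symm hv)
      rw [mul_inv, inv_inv, ← mul_assoc, mul_inv_cancel₀ hd, one_mul]
      ring
    · intro t ht
      simp only [mem_erase, mem_univ, and_true] at ht
      have : t * (t - d) = t ^ 2 * (1 - d * t⁻¹) := by
        field_simp
      rw [this, map_mul, map_pow]
      have := quadraticChar_sq_one (F := ZMod p) ht
      rw [this, one_mul]
  have hz := quadraticChar_sum_zero (F := ZMod p) (rc2 hp2)
  rw [← Finset.add_sum_erase _ _ (mem_univ (1 : ZMod p)), map_one] at hz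
  rw [key]
  omega

/-- Sum over y of F(y²) equals weighted sum with quadratic character. -/
lemma sum_sq_eq (hp2 : p ≠ 2) (F : ZMod p → ℤ) :
    ∑ y : ZMod p, F (y ^ 2) = ∑ t : ZMod p, (1 + quadraticChar (ZMod p) t) * F t := by
  classical
  rw [← Finset.sum_fiberwise univ (fun y : ZMod p => y ^ 2) (fun y : ZMod p => F (y ^ 2))]
  refine Finset.sum_congr rfl fun t _ => ?_
  have hcard : ((univ.filter fun y : ZMod p => y ^ 2 = t).card : ℤ)
      = quadraticChar (ZMod p) t + 1 := by
    have := quadraticChar_card_sqrts (rc2 hp2) t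
    rw [← this]
    congr 1
    rw [Set.toFinset_setOf]
  calc ∑ y ∈ univ.filter fun y : ZMod p => y ^ 2 = t, F (y ^ 2)
      = ∑ y ∈ univ.filter fun y : ZMod p => y ^ 2 = t, F t := by
        refine Finset.sum_congr rfl fun y hy => ?_
        rw [(Finset.mem_filter.mp hy).2]
    _ = ((univ.filter fun y : ZMod p => y ^ 2 = t).card : ℤ) * F t := by
        rw [Finset.sum_const, nsmul_eq_mul]
    _ = (1 + quadraticChar (ZMod p) t) * F t := by rw [hcard]; ring

lemma sum_char_sq_sub (hp2 : p ≠ 2) (d : ZMod p) (hd : d ≠ 0) :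
    ∑ u : ZMod p, quadraticChar (ZMod p) (u ^ 2 - d) = -1 := by
  rw [sum_sq_eq hp2 (fun t => quadraticChar (ZMod p) (t - d))]
  have e1 : ∑ t : ZMod p, quadraticChar (ZMod p) (t - d) = 0 :=
    (Fintype.sum_equiv (Equiv.subRight d) (fun t : ZMod p => quadraticChar (ZMod p) (t - d))
      (quadraticChar (ZMod p)) (fun t => rfl)).trans (quadraticChar_sum_zero (rc2 hp2))
  have e2 : ∑ t : ZMod p, quadraticChar (ZMod p) t * quadraticChar (ZMod p) (t - d) = -1 := by
    rw [show (fun t : ZMod p => quadraticChar (ZMod p) t * quadraticChar (ZMod p) (t - d))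
      = fun t => quadraticChar (ZMod p) (t * (t - d)) from funext fun t => (map_mul _ _ _).symm]
    exact sum_char_mul_shift hp2 d hd
  calc ∑ t : ZMod p, (1 + quadraticChar (ZMod p) t) * quadraticChar (ZMod p) (t - d)
      = (∑ t : ZMod p, quadraticChar (ZMod p) (t - d))
        + ∑ t : ZMod p, quadraticChar (ZMod p) t * quadraticChar (ZMod p) (t - d) := by
        rw [← Finset.sum_add_distrib]; refine Finset.sum_congr rfl fun t _ => by ring
    _ = -1 := by rw [e1, e2]; ring

lemma sum_char_prod (hp2 : p ≠ 2) (A B : ZMod p) (hAB : A ≠ B) :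
    ∑ t : ZMod p, quadraticChar (ZMod p) ((t - A) * (t - B)) = -1 := by
  have h2 : (2 : ZMod p) ≠ 0 := Ring.two_ne_zero (rc2 hp2)
  set m : ZMod p := (A + B) / 2 with hm
  set c : ZMod p := (A - B) / 2 with hc
  have hcne : c ≠ 0 := by
    rw [hc, div_ne_zero_iff]
    exact ⟨sub_ne_zero.mpr hAB, h2⟩
  have key : ∀ u : ZMod p, ((u + m) - A) * ((u + m) - B) = u ^ 2 - c ^ 2 := by
    intro u
    rw [hm, hc]
    field_simp
    ring
  have := Fintype.sum_equiv (Equiv.addRight m)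
    (fun u : ZMod p => quadraticChar (ZMod p) (u ^ 2 - c ^ 2))
    (fun t : ZMod p => quadraticChar (ZMod p) ((t - A) * (t - B)))
    (fun u => by simp only [Equiv.coe_addRight]; rw [key u])
  rw [← this]
  exact sum_char_sq_sub hp2 _ (pow_ne_zero 2 hcne)

lemma abs_quadChar_le_one (x : ZMod p) : |quadraticChar (ZMod p) x| ≤ 1 := by
  by_cases hx : x = 0
  · simp [hx]
  · rcases quadraticChar_dichotomy hx with h | h <;> rw [h] <;> norm_num

/-- The key contradiction: the quadratic characters of y²-A and y²-B cannot agree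
for all y when A ≠ B are both nonzero. -/
lemma char_eq_contra (hp2 : p ≠ 2) (A B : ZMod p) (hA : A ≠ 0) (hB : B ≠ 0) (hAB : A ≠ B)
    (h : ∀ y : ZMod p, quadraticChar (ZMod p) (y ^ 2 - A) = quadraticChar (ZMod p) (y ^ 2 - B)) :
    False := by
  classical
  by_cases hsA : IsSquare A
  · obtain ⟨s, hs⟩ := hsA
    have h1 : quadraticChar (ZMod p) (s ^ 2 - A) = 0 := by
      rw [show s ^ 2 - A = 0 by rw [hs]; ring]
      exact MulChar.map_zero _
    have h2 := (h s).symm.trans h1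
    rw [quadraticChar_eq_zero_iff] at h2
    exact hAB (by linear_combination h2 + hs)
  by_cases hsB : IsSquare B
  · obtain ⟨s, hs⟩ := hsB
    have h1 : quadraticChar (ZMod p) (s ^ 2 - B) = 0 := by
      rw [show s ^ 2 - B = 0 by rw [hs]; ring]
      exact MulChar.map_zero _
    have h2 := (h s).trans h1
    rw [quadraticChar_eq_zero_iff] at h2
    exact hAB (by linear_combination -h2 - hs)
  -- both nonsquares
  have hyA : ∀ y : ZMod p, y ^ 2 - A ≠ 0 := by
    intro y hy
    exact hsA ⟨y, by linear_combination -hy - y*y + y^2⟩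
  have hT : ∑ y : ZMod p, quadraticChar (ZMod p) ((y ^ 2 - A) * (y ^ 2 - B)) = (p : ℤ) := by
    have : ∀ y : ZMod p, quadraticChar (ZMod p) ((y ^ 2 - A) * (y ^ 2 - B)) = 1 := by
      intro y
      rw [map_mul, ← h y, ← sq]
      exact quadraticChar_sq_one (hyA y)
    rw [Finset.sum_congr rfl fun y _ => this y, Finset.sum_const]
    simp [Finset.card_univ, ZMod.card]
  have hT2 : ∑ y : ZMod p, quadraticChar (ZMod p) ((y ^ 2 - A) * (y ^ 2 - B))
      = -1 + ∑ t : ZMod p, quadraticChar (ZMod p) t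
          * quadraticChar (ZMod p) ((t - A) * (t - B)) := by
    rw [sum_sq_eq hp2 (fun t => quadraticChar (ZMod p) ((t - A) * (t - B)))]
    calc ∑ t : ZMod p, (1 + quadraticChar (ZMod p) t)
          * quadraticChar (ZMod p) ((t - A) * (t - B))
        = ∑ t : ZMod p, (quadraticChar (ZMod p) ((t - A) * (t - B))
            + quadraticChar (ZMod p) t * quadraticChar (ZMod p) ((t - A) * (t - B))) :=
          Finset.sum_congr rfl fun t _ => by ring
      _ = (∑ t : ZMod p, quadraticChar (ZMod p) ((t - A) * (t - B)))
            + ∑ t : ZMod p, quadraticChar (ZMod p) t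
              * quadraticChar (ZMod p) ((t - A) * (t - B)) := Finset.sum_add_distrib
      _ = _ := by rw [sum_char_prod hp2 A B hAB]
  have hSle : ∑ t : ZMod p, quadraticChar (ZMod p) t
      * quadraticChar (ZMod p) ((t - A) * (t - B)) ≤ (p : ℤ) := by
    calc _ ≤ ∑ _t : ZMod p, (1 : ℤ) := by
          refine Finset.sum_le_sum fun t _ => ?_
          have h1 := abs_quadChar_le_one (p := p) t
          have h2 := abs_quadChar_le_one (p := p) ((t - A) * (t - B))
          have := abs_mul (quadraticChar (ZMod p) t) (quadraticChar (ZMod p) ((t - A) * (t - B)))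
          have habs : |quadraticChar (ZMod p) t * quadraticChar (ZMod p) ((t - A) * (t - B))|
              ≤ 1 := by
            rw [this]
            calc _ ≤ |quadraticChar (ZMod p) t| * 1 :=
                  mul_le_mul_of_nonneg_left h2 (abs_nonneg _)
              _ ≤ 1 := by rw [mul_one]; exact h1
          exact le_trans (le_abs_self _) habs
      _ = (p : ℤ) := by rw [Finset.sum_const]; simp [Finset.card_univ, ZMod.card]
  rw [hT2] at hT
  omega

/-- number of x ≠ 0 with A x + x⁻¹ = y -/
noncomputable def cnt (p : ℕ) [Fact p.Prime] (A y : ZMod p) : ℕ :=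
  (univ.filter fun x : ZMod p => x ≠ 0 ∧ A * x + x⁻¹ = y).card

lemma cnt_eq (hp2 : p ≠ 2) (A : ZMod p) (hA : A ≠ 0) (y : ZMod p) :
    (cnt p A y : ℤ) = 1 + quadraticChar (ZMod p) (y ^ 2 - 4 * A) := by
  classical
  have h2 : (2 : ZMod p) ≠ 0 := Ring.two_ne_zero (rc2 hp2)
  have h2A : 2 * A ≠ 0 := mul_ne_zero h2 hA
  have hkey : (univ.filter fun x : ZMod p => x ≠ 0 ∧ A * x + x⁻¹ = y).card
      = (univ.filter fun u : ZMod p => u ^ 2 = y ^ 2 - 4 * A).card := by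
    apply Finset.card_nbij' (fun x => 2 * A * x - y) (fun u => (y + u) / (2 * A))
    · intro x hx
      simp only [mem_coe, mem_filter, mem_univ, true_and] at hx ⊢
      obtain ⟨hx0, hxy⟩ := hx
      have hq : A * x ^ 2 - y * x + 1 = 0 := by
        have := congrArg (· * x) hxy
        simp only [add_mul] at this
        rw [inv_mul_cancel₀ hx0] at this
        linear_combination this
      linear_combination 4 * A * hq
    · intro u hu
      simp only [mem_coe, mem_filter, mem_univ, true_and] at hu ⊢
      have hx0 : (y + u) / (2 * A) ≠ 0 := by
        intro h
        have hyu : y + u = 0 := by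
          field_simp at h
          simpa using h
        have : u = -y := by linear_combination hyu
        rw [this] at hu
        have h4A : 4 * A = 0 := by linear_combination hu
        have h4 : (4 : ZMod p) ≠ 0 := by
          have : (4 : ZMod p) = 2 * 2 := by norm_num
          rw [this]; exact mul_ne_zero h2 h2
        exact h4 (by
          rcases mul_eq_zero.mp h4A with h' | h'
          · exact h'
          · exact absurd h' hA)
      refine ⟨hx0, ?_⟩
      set x := (y + u) / (2 * A) with hxdef
      have hx2 : (2 * A) * x = y + u := by
        rw [hxdef]; field_simp
      have h4 : 4 * A * (A * x ^ 2 - y * x + 1) = 0 := by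
        linear_combination (2 * A * x - y + u) * hx2 + hu
      have h4ne : (4 : ZMod p) * A ≠ 0 := by
        have h4 : (4 : ZMod p) ≠ 0 := by
          have : (4 : ZMod p) = 2 * 2 := by norm_num
          rw [this]; exact mul_ne_zero h2 h2
        exact mul_ne_zero h4 hA
      have hq : A * x ^ 2 - y * x + 1 = 0 := by
        rcases mul_eq_zero.mp h4 with h' | h'
        · exact absurd h' h4ne
        · exact h'
      have hinv : x⁻¹ = y - A * x :=
        inv_eq_of_mul_eq_one_right (by linear_combination -hq)
      rw [hinv]; ring
    · intro x hx
      simp only [mem_coe, mem_filter, mem_univ, true_and] at hx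
      field_simp
      try ring
    · intro u hu
      field_simp
      try ring
  rw [cnt, hkey]
  have := quadraticChar_card_sqrts (rc2 hp2) (y ^ 2 - 4 * A)
  rw [Set.toFinset_setOf] at this
  rw [this]
  ring

lemma cnt_sum (A : ZMod p) : ∑ y : ZMod p, cnt p A y = p - 1 := by
  classical
  have hfib := Finset.sum_fiberwise (univ.filter fun x : ZMod p => x ≠ 0)
    (fun x => A * x + x⁻¹) (fun _ => (1 : ℕ))
  have hc : ∀ y : ZMod p, cnt p A y
      = ∑ x ∈ (univ.filter fun x : ZMod p => x ≠ 0).filter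
          (fun x => A * x + x⁻¹ = y), (1 : ℕ) := by
    intro y
    rw [Finset.sum_const, smul_eq_mul, mul_one, cnt, Finset.filter_filter]
  rw [Finset.sum_congr rfl fun y _ => hc y, hfib, Finset.sum_const, smul_eq_mul, mul_one,
    Finset.filter_ne', Finset.card_erase_of_mem (mem_univ _), Finset.card_univ, ZMod.card]

lemma zeta_int_pow (hζ : Complex.exp (2 * Real.pi * Complex.I / p) ^ p = 1) (m : ℤ) :
    Complex.exp (2 * Real.pi * Complex.I / p) ^ m
      = Complex.exp (2 * Real.pi * Complex.I / p) ^ ((m : ZMod p)).val := by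
  haveI : NeZero p := ⟨(Fact.out : p.Prime).pos.ne'⟩
  set ζ := Complex.exp (2 * Real.pi * Complex.I / p)
  have hdvd : (p : ℤ) ∣ m - ((m : ZMod p).val : ℤ) := by
    rw [← ZMod.intCast_zmod_eq_zero_iff_dvd]
    push_cast
    simp
  obtain ⟨k, hk⟩ := hdvd
  have hm : m = ((m : ZMod p).val : ℤ) + p * k := by linarith
  have hstep : ζ ^ m = ζ ^ (((m : ZMod p).val : ℤ) + (p : ℤ) * k) := by rw [← hm]
  have hζne : ζ ≠ 0 := Complex.exp_ne_zero _
  rw [hstep, zpow_add₀ hζne, zpow_natCast, zpow_mul, zpow_natCast, hζ, one_zpow, mul_one]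

lemma kloos_expand (a : ℤ) :
    kloos a 1 p = ∑ y : ZMod p, (cnt p (a : ZMod p) y : ℂ)
      * Complex.exp (2 * Real.pi * Complex.I / p) ^ (y.val) := by
  classical
  haveI : NeZero p := ⟨(Fact.out : p.Prime).pos.ne'⟩
  have hp : p.Prime := Fact.out
  set ζ := Complex.exp (2 * Real.pi * Complex.I / p) with hζdef
  have hprim : IsPrimitiveRoot ζ p := Complex.isPrimitiveRoot_exp p hp.pos.ne'
  have hζp : ζ ^ p = 1 := hprim.pow_eq_one
  have heC : ∀ m : ℤ, eC (m / p) = ζ ^ m := by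
    intro m
    rw [eC, hζdef, show 2 * (Real.pi : ℂ) * Complex.I * (m / p)
      = m * (2 * Real.pi * Complex.I / p) by ring]
    exact Complex.exp_int_mul _ m
  -- step 1 : kloos as a sum over ZMod p
  have step1 : kloos a 1 p
      = ∑ x : ZMod p, (if x ≠ 0 then ζ ^ (((a : ZMod p) * x + x⁻¹).val) else 0) := by
    rw [kloos]
    apply Finset.sum_nbij' (fun x : ℕ => (x : ZMod p)) (fun X : ZMod p => X.val)
    · intro x _; exact mem_univ _
    · intro X _
      exact Finset.mem_range.mpr (ZMod.val_lt X)
    · intro x hx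
      exact ZMod.val_natCast_of_lt (Finset.mem_range.mp hx)
    · intro X _
      exact ZMod.natCast_rightInverse X
    · intro x hx
      have hgcd : Nat.gcd x p = 1 ↔ (x : ZMod p) ≠ 0 := by
        rw [Ne, ZMod.natCast_eq_zero_iff]
        constructor
        · intro h hdvd
          have h1 : p ∣ 1 := h ▸ Nat.dvd_gcd hdvd dvd_rfl
          have := Nat.le_of_dvd one_pos h1
          have := hp.two_le
          omega
        · intro h
          exact (Nat.coprime_comm.mp (hp.coprime_iff_not_dvd.mpr h))
      by_cases hx0 : (x : ZMod p) ≠ 0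
      · rw [if_pos (hgcd.mpr hx0), if_pos hx0]
        rw [show ((a : ℂ) * (x : ℂ) + (((1 : ℤ) : ℂ)) * ((((x : ZMod p))⁻¹.val : ℕ) : ℂ))
            = (((a * x + ((x : ZMod p))⁻¹.val : ℤ) : ℂ)) by push_cast; ring,
          heC, zeta_int_pow hζp]
        congr 2
        push_cast
        simp
      · rw [if_neg (fun h => hx0 (hgcd.mp h)), if_neg hx0]
  rw [step1]
  -- step 2 : fiber the sum
  have step2 : ∑ x : ZMod p, (if x ≠ 0 then ζ ^ (((a : ZMod p) * x + x⁻¹).val) else 0)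
      = ∑ x ∈ univ.filter (fun x : ZMod p => x ≠ 0),
          ζ ^ (((a : ZMod p) * x + x⁻¹).val) := by
    rw [Finset.sum_filter]
  rw [step2, ← Finset.sum_fiberwise (univ.filter fun x : ZMod p => x ≠ 0)
    (fun x => (a : ZMod p) * x + x⁻¹) (fun x => ζ ^ (((a : ZMod p) * x + x⁻¹).val))]
  refine Finset.sum_congr rfl fun y _ => ?_
  have : ∀ x ∈ (univ.filter fun x : ZMod p => x ≠ 0).filter
      (fun x => (a : ZMod p) * x + x⁻¹ = y), ζ ^ (((a : ZMod p) * x + x⁻¹).val)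
        = ζ ^ (y.val) := by
    intro x hx
    rw [(Finset.mem_filter.mp hx).2]
  rw [Finset.sum_congr rfl this, Finset.sum_const, nsmul_eq_mul]
  congr 1
  rw [cnt, Finset.filter_filter]

/-- reindexing sums over `ZMod p` as sums over `range p` -/
lemma sum_zmod_eq_sum_range {M : Type*} [AddCommMonoid M] (f : ZMod p → ℕ → M) :
    ∑ y : ZMod p, f y y.val = ∑ i ∈ range p, f (i : ZMod p) i := by
  haveI : NeZero p := ⟨(Fact.out : p.Prime).pos.ne'⟩
  apply Finset.sum_nbij' (fun y : ZMod p => y.val) (fun i : ℕ => (i : ZMod p))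
  · intro y _; exact Finset.mem_range.mpr (ZMod.val_lt y)
  · intro i _; exact mem_univ _
  · intro y _; exact ZMod.natCast_rightInverse y
  · intro i hi; exact ZMod.val_natCast_of_lt (Finset.mem_range.mp hi)
  · intro y _
    rw [ZMod.natCast_rightInverse y]

lemma dzero (d : ℕ → ℤ)
    (hroot : ∑ i ∈ range p, (d i : ℂ) * Complex.exp (2 * Real.pi * Complex.I / p) ^ i = 0)
    (hsum : ∑ i ∈ range p, d i = 0) : ∀ i < p, d i = 0 := by
  classical
  have hp : p.Prime := Fact.out
  set ζ := Complex.exp (2 * Real.pi * Complex.I / p) with hζdef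
  have hprim : IsPrimitiveRoot ζ p := Complex.isPrimitiveRoot_exp p hp.pos.ne'
  set P : Polynomial ℚ := ∑ i ∈ range p, Polynomial.C ((d i : ℚ)) * Polynomial.X ^ i with hP
  have hcoeff : ∀ i < p, P.coeff i = (d i : ℚ) := by
    intro i hi
    rw [hP, Polynomial.finset_sum_coeff]
    rw [Finset.sum_eq_single i]
    · simp
    · intro j _ hj
      simp [Polynomial.coeff_C_mul, Polynomial.coeff_X_pow, Ne.symm hj]
    · intro h
      exact absurd (Finset.mem_range.mpr hi) h
  have haeval : Polynomial.aeval ζ P = 0 := by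
    rw [hP, map_sum]
    have : ∀ i ∈ range p, Polynomial.aeval ζ (Polynomial.C ((d i : ℚ)) * Polynomial.X ^ i)
        = (d i : ℂ) * ζ ^ i := by
      intro i _
      rw [map_mul, map_pow, Polynomial.aeval_X, Polynomial.aeval_C]
      norm_cast
    rw [Finset.sum_congr rfl this]
    exact hroot
  have hint : IsIntegral ℚ ζ := (hprim.isIntegral hp.pos).tower_top
  have hdvd : minpoly ℚ ζ ∣ P := minpoly.dvd ℚ ζ haeval
  rw [← Polynomial.cyclotomic_eq_minpoly_rat hprim hp.pos] at hdvd
  obtain ⟨Q, hQ⟩ := hdvd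
  -- show all coefficients of P below p are equal to q := Q.coeff 0
  have hconst : ∃ q : ℚ, ∀ i < p, P.coeff i = q := by
    by_cases hP0 : P = 0
    · exact ⟨0, fun i _ => by rw [hP0]; simp⟩
    have hQ0 : Q ≠ 0 := by
      intro h; rw [h, mul_zero] at hQ; exact hP0 hQ
    have hcyc0 : Polynomial.cyclotomic p ℚ ≠ 0 := Polynomial.cyclotomic_ne_zero p ℚ
    have hdegP : P.natDegree ≤ p - 1 := by
      rw [hP]
      apply Polynomial.natDegree_sum_le_of_forall_le
      intro i hi
      refine le_trans (Polynomial.natDegree_C_mul_le _ _) ?_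
      rw [Polynomial.natDegree_X_pow]
      have := Finset.mem_range.mp hi
      omega
    have hdegc : (Polynomial.cyclotomic p ℚ).natDegree = p - 1 := by
      rw [Polynomial.natDegree_cyclotomic, Nat.totient_prime hp]
    have hmul := Polynomial.natDegree_mul hcyc0 hQ0
    rw [← hQ, hdegc] at hmul
    have hQdeg : Q.natDegree = 0 := by omega
    obtain ⟨q, hq⟩ := Polynomial.natDegree_eq_zero.mp hQdeg
    refine ⟨q, fun i hi => ?_⟩
    rw [hQ, ← hq, Polynomial.coeff_mul_C, Polynomial.cyclotomic_prime ℚ p,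
      Polynomial.finset_sum_coeff]
    rw [Finset.sum_eq_single i]
    · simp
    · intro j _ hj
      simp [Polynomial.coeff_X_pow, Ne.symm hj]
    · intro h
      exact absurd (Finset.mem_range.mpr hi) h
  obtain ⟨q, hq⟩ := hconst
  have hsq : ∑ i ∈ range p, P.coeff i = p * q := by
    rw [Finset.sum_congr rfl fun i hi => hq i (Finset.mem_range.mp hi), Finset.sum_const]
    simp [mul_comm]
  have hsq2 : ∑ i ∈ range p, P.coeff i = 0 := by
    rw [Finset.sum_congr rfl fun i hi => hcoeff i (Finset.mem_range.mp hi)]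
    have := congrArg (fun z : ℤ => (z : ℚ)) hsum
    push_cast at this
    exact this
  have hq0 : q = 0 := by
    rw [hsq2] at hsq
    have : (p : ℚ) ≠ 0 := Nat.cast_ne_zero.mpr hp.pos.ne'
    field_simp at hsq
    exact (mul_eq_zero.mp hsq.symm).resolve_left this
  intro i hi
  have := (hcoeff i hi).symm.trans (hq i hi)
  rw [hq0] at this
  exact_mod_cast this

theorem stmt10 (p : ℕ) (hp : p.Prime) (hp2 : 2 < p) (a b : ℤ)
    (hco : Int.gcd (a * b) p = 1) (hab : ¬ a ≡ b [ZMOD (p : ℤ)]) :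
    kloos a 1 p ≠ kloos b 1 p := by
  haveI : Fact p.Prime := ⟨hp⟩
  have hpne2 : p ≠ 2 := by omega
  intro h
  set A := (a : ZMod p) with hAdef
  set B := (b : ZMod p) with hBdef
  have hcop : IsCoprime (a * b) (p : ℤ) := Int.isCoprime_iff_gcd_eq_one.mpr hco
  have hA0 : A ≠ 0 := by
    intro h0
    have hdvd : (p : ℤ) ∣ a := (ZMod.intCast_zmod_eq_zero_iff_dvd a p).mp h0
    have hu : IsUnit (p : ℤ) := hcop.isUnit_of_dvd' (dvd_mul_of_dvd_left hdvd b) dvd_rfl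
    rw [Int.isUnit_iff] at hu
    omega
  have hB0 : B ≠ 0 := by
    intro h0
    have hdvd : (p : ℤ) ∣ b := (ZMod.intCast_zmod_eq_zero_iff_dvd b p).mp h0
    have hu : IsUnit (p : ℤ) := hcop.isUnit_of_dvd' (dvd_mul_of_dvd_right hdvd a) dvd_rfl
    rw [Int.isUnit_iff] at hu
    omega
  have hAB : A ≠ B := fun hEq => hab ((ZMod.intCast_eq_intCast_iff a b p).mp hEq)
  set ζ := Complex.exp (2 * Real.pi * Complex.I / p) with hζdef
  rw [kloos_expand a, kloos_expand b] at h
  set d : ℕ → ℤ := fun i => (cnt p A (i : ZMod p) : ℤ) - cnt p B (i : ZMod p) with hd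
  have hsumA : ∑ y : ZMod p, (cnt p A y : ℂ) * ζ ^ (y.val)
      = ∑ i ∈ Finset.range p, (cnt p A (i : ZMod p) : ℂ) * ζ ^ i :=
    sum_zmod_eq_sum_range (fun y i => (cnt p A y : ℂ) * ζ ^ i)
  have hsumB : ∑ y : ZMod p, (cnt p B y : ℂ) * ζ ^ (y.val)
      = ∑ i ∈ Finset.range p, (cnt p B (i : ZMod p) : ℂ) * ζ ^ i :=
    sum_zmod_eq_sum_range (fun y i => (cnt p B y : ℂ) * ζ ^ i)
  have hroot : ∑ i ∈ Finset.range p, (d i : ℂ) * ζ ^ i = 0 := by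
    have : ∑ i ∈ Finset.range p, (d i : ℂ) * ζ ^ i
        = (∑ i ∈ Finset.range p, (cnt p A (i : ZMod p) : ℂ) * ζ ^ i)
          - ∑ i ∈ Finset.range p, (cnt p B (i : ZMod p) : ℂ) * ζ ^ i := by
      rw [← Finset.sum_sub_distrib]
      refine Finset.sum_congr rfl fun i _ => ?_
      rw [hd]
      push_cast
      ring
    rw [this, ← hsumA, ← hsumB, h, sub_self]
  have hsum : ∑ i ∈ Finset.range p, d i = 0 := by
    have hA' : ∑ i ∈ Finset.range p, (cnt p A (i : ZMod p) : ℤ)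
        = ∑ y : ZMod p, (cnt p A y : ℤ) :=
      (sum_zmod_eq_sum_range (fun y _ => (cnt p A y : ℤ))).symm
    have hB' : ∑ i ∈ Finset.range p, (cnt p B (i : ZMod p) : ℤ)
        = ∑ y : ZMod p, (cnt p B y : ℤ) :=
      (sum_zmod_eq_sum_range (fun y _ => (cnt p B y : ℤ))).symm
    have hA'' : ∑ y : ZMod p, (cnt p A y : ℤ) = ((p : ℤ) - 1) := by
      rw [← Nat.cast_sum]
      rw [cnt_sum A]
      have := hp.pos
      omega
    have hB'' : ∑ y : ZMod p, (cnt p B y : ℤ) = ((p : ℤ) - 1) := by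
      rw [← Nat.cast_sum, cnt_sum B]
      have := hp.pos
      omega
    rw [hd]
    rw [Finset.sum_sub_distrib, hA', hB', hA'', hB'', sub_self]
  have hdz := dzero d hroot hsum
  have hcnteq : ∀ y : ZMod p, (cnt p A y : ℤ) = (cnt p B y : ℤ) := by
    intro y
    have := hdz y.val (ZMod.val_lt y)
    rw [hd] at this
    simp only at this
    rw [ZMod.natCast_rightInverse y] at this
    omega
  have hchar : ∀ y : ZMod p, quadraticChar (ZMod p) (y ^ 2 - 4 * A)
      = quadraticChar (ZMod p) (y ^ 2 - 4 * B) := by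
    intro y
    have h1 := cnt_eq hpne2 A hA0 y
    have h2 := cnt_eq hpne2 B hB0 y
    rw [hcnteq y] at h1
    omega
  have h2ne : (2 : ZMod p) ≠ 0 := Ring.two_ne_zero (rc2 hpne2)
  have h4ne : (4 : ZMod p) ≠ 0 := by
    have : (4 : ZMod p) = 2 * 2 := by norm_num
    rw [this]; exact mul_ne_zero h2ne h2ne
  exact char_eq_contra hpne2 (4 * A) (4 * B) (mul_ne_zero h4ne hA0) (mul_ne_zero h4ne hB0)
    (fun hEq => hAB (mul_left_cancel₀ h4ne hEq)) hchar
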